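/- Let f : ℂ → ℂ, let A and γ be real 2×2 matrices with positive determinant, let F be a primitive of f on ℍ, and let G be any primitive of the weight-2 slash f|₂A on ℍ. Then for every τ ∈ ℍ: F(τ) − F((Aγ)·τ) = (G(τ) − G(γ·τ)) + (F(τ) − F(A·τ)). (Equivalently, the modular integral satisfies the cocycle relation φ_f^τ(Aγ(τ)) = φ_{f|A}^τ(γ(τ)) + φ_f^τ(A(τ)).) -/

import Mathlib

/-- The Möbius action of a real `2×2` matrix on `ℂ`: `A·z = (az+b)/(cz+d)`. -/
noncomputable def moebius (A : Matrix (Fin 2) (Fin 2) ℝ) (z : ℂ) : ℂ :=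
  ((A 0 0 : ℂ) * z + (A 0 1 : ℂ)) / ((A 1 0 : ℂ) * z + (A 1 1 : ℂ))

/-- The weight-2 slash of `f : ℂ → ℂ` by `A`: `(f|₂A)(z) = det(A)·(cz+d)⁻²·f(A·z)`. -/
noncomputable def slashTwo (f : ℂ → ℂ) (A : Matrix (Fin 2) (Fin 2) ℝ) (z : ℂ) : ℂ :=
  (A.det : ℂ) * ((A 1 0 : ℂ) * z + (A 1 1 : ℂ)) ^ (-2 : ℤ) * f (moebius A z)

lemma denom_ne_zero (A : Matrix (Fin 2) (Fin 2) ℝ) (hA : 0 < A.det) {z : ℂ}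
    (hz : 0 < z.im) : (A 1 0 : ℂ) * z + (A 1 1 : ℂ) ≠ 0 := by
  intro h
  have him : (A 1 0) * z.im = 0 := by
    have := congrArg Complex.im h
    simpa using this
  have h10 : A 1 0 = 0 := by
    rcases mul_eq_zero.1 him with h' | h'
    · exact h'
    · exact absurd h' hz.ne'
  have h11 : A 1 1 = 0 := by
    have := congrArg Complex.re h
    simp [h10] at this
    exact this
  rw [Matrix.det_fin_two, h10, h11] at hA
  simp at hA

lemma im_moebius (A : Matrix (Fin 2) (Fin 2) ℝ) (_hA : 0 < A.det) {z : ℂ}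
    (_hz : 0 < z.im) : (moebius A z).im =
      A.det * z.im / Complex.normSq ((A 1 0 : ℂ) * z + (A 1 1 : ℂ)) := by
  rw [moebius, Complex.div_im]
  rw [Matrix.det_fin_two]
  simp [Complex.normSq_apply]
  ring

lemma moebius_mem (A : Matrix (Fin 2) (Fin 2) ℝ) (hA : 0 < A.det) {z : ℂ}
    (hz : 0 < z.im) : 0 < (moebius A z).im := by
  rw [im_moebius A hA hz]
  have h0 : (A 1 0 : ℂ) * z + (A 1 1 : ℂ) ≠ 0 := denom_ne_zero A hA hz
  exact div_pos (mul_pos hA hz) (Complex.normSq_pos.2 h0)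

lemma hasDerivAt_moebius (A : Matrix (Fin 2) (Fin 2) ℝ) (hA : 0 < A.det) {z : ℂ}
    (hz : 0 < z.im) :
    HasDerivAt (moebius A) ((A.det : ℂ) / ((A 1 0 : ℂ) * z + (A 1 1 : ℂ)) ^ 2) z := by
  have hd : (A 1 0 : ℂ) * z + (A 1 1 : ℂ) ≠ 0 := denom_ne_zero A hA hz
  have h1 : HasDerivAt (fun w : ℂ => (A 0 0 : ℂ) * w + (A 0 1 : ℂ)) (A 0 0 : ℂ) z := by
    simpa using ((hasDerivAt_id z).const_mul (A 0 0 : ℂ)).add_const (A 0 1 : ℂ)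
  have h2 : HasDerivAt (fun w : ℂ => (A 1 0 : ℂ) * w + (A 1 1 : ℂ)) (A 1 0 : ℂ) z := by
    simpa using ((hasDerivAt_id z).const_mul (A 1 0 : ℂ)).add_const (A 1 1 : ℂ)
  have := h1.div h2 hd
  refine this.congr_deriv ?_
  symm
  rw [Matrix.det_fin_two]
  push_cast
  field_simp
  ring

lemma moebius_mul (A γ : Matrix (Fin 2) (Fin 2) ℝ) (hA : 0 < A.det) (hγ : 0 < γ.det)
    {z : ℂ} (hz : 0 < z.im) : moebius (A * γ) z = moebius A (moebius γ z) := by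
  have hdγ : (γ 1 0 : ℂ) * z + (γ 1 1 : ℂ) ≠ 0 := denom_ne_zero γ hγ hz
  have hw : 0 < (moebius γ z).im := moebius_mem γ hγ hz
  have hdA : (A 1 0 : ℂ) * (moebius γ z) + (A 1 1 : ℂ) ≠ 0 := denom_ne_zero A hA hw
  have hdAγ : ((A * γ) 1 0 : ℂ) * z + ((A * γ) 1 1 : ℂ) ≠ 0 :=
    denom_ne_zero (A * γ) (by rw [Matrix.det_mul]; positivity) hz
  simp only [moebius] at hdA ⊢
  rw [div_eq_div_iff hdAγ hdA]
  field_simp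
  have hdγ' : (z * (γ 1 0 : ℂ) + (γ 1 1 : ℂ)) ≠ 0 := by rwa [mul_comm z]
  rw [div_add' _ _ _ hdγ', div_add' _ _ _ hdγ', mul_div_assoc', div_mul_eq_mul_div,
    div_left_inj' hdγ']
  simp only [Matrix.mul_apply, Fin.sum_univ_two]
  push_cast
  ring

/-- Cocycle relation for modular integrals: if `F` is a primitive of `f` on
`ℍ` and `G` is any primitive of `f|₂A` on `ℍ`, then for `τ ∈ ℍ`,
`F(τ) − F((Aγ)·τ) = (G(τ) − G(γ·τ)) + (F(τ) − F(A·τ))`, i.e.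
`φ_f^τ(Aγ(τ)) = φ_{f|A}^τ(γ(τ)) + φ_f^τ(A(τ))`. -/
theorem modular_integral_cocycle (f : ℂ → ℂ) (A γ : Matrix (Fin 2) (Fin 2) ℝ)
    (hA : 0 < A.det) (hγ : 0 < γ.det) (F G : ℂ → ℂ)
    (hF : ∀ z : ℂ, 0 < z.im → HasDerivAt F (f z) z)
    (hG : ∀ z : ℂ, 0 < z.im → HasDerivAt G (slashTwo f A z) z) :
    ∀ τ : ℂ, 0 < τ.im →
      F τ - F (moebius (A * γ) τ) = (G τ - G (moebius γ τ)) + (F τ - F (moebius A τ)) := by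
  intro τ hτ
  set s : Set ℂ := {z : ℂ | 0 < z.im} with hs
  have hsopen : IsOpen s := isOpen_lt continuous_const Complex.continuous_im
  have hsconv : Convex ℝ s := convex_halfSpace_im_gt 0
  set D : ℂ → ℂ := fun z => G z - F (moebius A z) with hD
  have hDderiv : ∀ z ∈ s, HasDerivAt D 0 z := by
    intro z hz
    have hz' : 0 < z.im := hz
    have hM := hasDerivAt_moebius A hA hz'
    have hFA : HasDerivAt (fun w => F (moebius A w))
        (f (moebius A z) * ((A.det : ℂ) / ((A 1 0 : ℂ) * z + (A 1 1 : ℂ)) ^ 2)) z :=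
      (hF _ (moebius_mem A hA hz')).comp z hM
    have := (hG z hz').sub hFA
    have hslash : slashTwo f A z =
        f (moebius A z) * ((A.det : ℂ) / ((A 1 0 : ℂ) * z + (A 1 1 : ℂ)) ^ 2) := by
      rw [slashTwo, zpow_neg, zpow_two, div_eq_mul_inv, sq]
      ring
    refine this.congr_deriv ?_
    symm
    rw [hslash]
    ring
  have hconst : D τ = D (moebius γ τ) := by
    apply hsconv.is_const_of_fderivWithin_eq_zero (𝕜 := ℂ)
      (fun z hz => ((hDderiv z hz).differentiableAt).differentiableWithinAt)
    · intro z hz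
      rw [fderivWithin_of_isOpen hsopen hz, (hDderiv z hz).hasFDerivAt.fderiv]
      ext
      simp
    · exact hτ
    · exact moebius_mem γ hγ hτ
  rw [moebius_mul A γ hA hγ hτ]
  have hconst' : G τ - F (moebius A τ) =
      G (moebius γ τ) - F (moebius A (moebius γ τ)) := hconst
  linear_combination -hconst'
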